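/- A d-periodic trajectory with period λ ≥ 0 is consistent for a P-TEG with matrices A⁰, A¹ (entries in ℝ_{≥0} ∪ {-∞}) and B⁰, B¹ (entries in ℝ_{≥0} ∪ {+∞}) if and only if the single max-plus inequality ((T_P ⊗ᵗ P) ⊕ (T_I ⊗ᵗ I) ⊕ (T_C ⊗ᵗ C)) ⊗ x̃ ⪯ x̃ has a solution x̃ ∈ ℝ^{dn}, where P = (B¹)^♯, I = A¹ ⊕ E, C = A⁰ ⊕ (B⁰)^♯, T_C = E_d, and T_P, T_I are the d×d cyclic shift matrices with corner weights dλ and -dλ respectively. -/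

import Mathlib

/-- Dual multiplication `⊙` on `ℝ̄`: like `+`, but `+∞` is absorbing. -/
noncomputable def dualAdd (a b : EReal) : EReal := if a = ⊤ ∨ b = ⊤ then ⊤ else a + b

/-- Max-plus identity matrix. -/
noncomputable def mpIdE (n : ℕ) : Matrix (Fin n) (Fin n) EReal :=
  fun i j => if i = j then 0 else ⊥

/-- A trajectory `x : ℕ → ℝⁿ` is consistent for the P-TEG `(A⁰, A¹, B⁰, B¹)` if it is
nondecreasing and for all `k`, `A⁰ ⊗ x(k) ⪯ x(k) ⪯ B⁰ ⊙ x(k)` and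
`A¹ ⊗ x(k) ⪯ x(k+1) ⪯ B¹ ⊙ x(k)`. -/
def Consistent {n : ℕ} (A0 A1 B0 B1 : Matrix (Fin n) (Fin n) EReal)
    (x : ℕ → Fin n → ℝ) : Prop :=
  ∀ k : ℕ,
    (∀ i, (⨆ j, A0 i j + (x k j : EReal)) ≤ (x k i : EReal)) ∧
    (∀ i, (x k i : EReal) ≤ ⨅ j, dualAdd (B0 i j) (x k j)) ∧
    (∀ i, (⨆ j, A1 i j + (x k j : EReal)) ≤ (x (k + 1) i : EReal)) ∧
    (∀ i, (x (k + 1) i : EReal) ≤ ⨅ j, dualAdd (B1 i j) (x k j)) ∧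
    (∀ i, x k i ≤ x (k + 1) i)

/-- `x` is `d`-periodic with period `λ`: `x(k+d) = dλ + x(k)` entrywise. -/
def DPeriodic {n : ℕ} (d : ℕ) (lam : ℝ) (x : ℕ → Fin n → ℝ) : Prop :=
  ∀ k i, x (k + d) i = (d : ℝ) * lam + x k i

/-- The cyclic shift matrix `T_P(λ)` (0-based indices), over `ℝ̄`. -/
noncomputable def TPE (d : ℕ) (lam : ℝ) : Matrix (Fin d) (Fin d) EReal :=
  fun i j => if (i : ℕ) + 1 = (j : ℕ) then 0
    else if (i : ℕ) = d - 1 ∧ (j : ℕ) = 0 then (((d : ℝ) * lam : ℝ) : EReal) else ⊥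

/-- The cyclic shift matrix `T_I(λ)` (0-based indices), over `ℝ̄`. -/
noncomputable def TIE (d : ℕ) (lam : ℝ) : Matrix (Fin d) (Fin d) EReal :=
  fun i j => if (j : ℕ) + 1 = (i : ℕ) then 0
    else if (i : ℕ) = 0 ∧ (j : ℕ) = d - 1 then ((-((d : ℝ) * lam) : ℝ) : EReal) else ⊥

lemma ereal_add_left_cancel_iff (c : ℝ) (a b : EReal) :
    (c : EReal) + a ≤ (c : EReal) + b ↔ a ≤ b := by
  rw [add_comm (c:EReal) a, add_comm (c:EReal) b]
  exact (EReal.addLECancellable_coe c).add_le_add_iff_right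

lemma dual_helper (B : EReal) (hB : B ≠ ⊥) (u v : ℝ) :
    (-B) + (u : EReal) ≤ (v : EReal) ↔ (u : EReal) ≤ dualAdd B (v : EReal) := by
  induction B with
  | bot => simp at hB
  | coe b =>
      rw [dualAdd, if_neg (by simp)]
      rw [← EReal.coe_neg, ← EReal.coe_add, ← EReal.coe_add, EReal.coe_le_coe_iff,
        EReal.coe_le_coe_iff]
      constructor <;> intro h <;> linarith
  | top => simp [dualAdd]

lemma rearr (c : ℝ) (M : EReal) (u : ℝ) :
    (c:EReal) + M + (u:EReal) = M + (((c+u:ℝ)):EReal) := by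
  push_cast; abel

lemma cancel_helper (c : ℝ) (M : EReal) : (c:EReal) + (((-c:ℝ):EReal) + M) = M := by
  induction M with
  | bot => simp
  | coe m => norm_cast; ring
  | top => rw [EReal.add_top_of_ne_bot (by simp), EReal.add_top_of_ne_bot (by simp)]

lemma shift_helper (M : EReal) (c u v : ℝ) :
    M + (u : EReal) ≤ (v : EReal) ↔ M + ((c + u : ℝ) : EReal) ≤ ((c + v : ℝ) : EReal) := by
  rw [show M + ((c+u:ℝ):EReal) = (c:EReal) + (M + ↑u) from by push_cast; abel,
    show ((c+v:ℝ):EReal) = (c:EReal) + ↑v from by push_cast; rfl,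
    ereal_add_left_cancel_iff]

lemma negshift_helper (c : ℝ) (M : EReal) (u v : ℝ) :
    ((-c : ℝ) : EReal) + M + (u : EReal) ≤ (v : EReal) ↔ M + (u:EReal) ≤ ((c + v : ℝ):EReal) := by
  rw [← ereal_add_left_cancel_iff c _ ↑v, ← add_assoc, cancel_helper, EReal.coe_add]

lemma max_add_le {a b c v : EReal} (h1 : a + c ≤ v) (h2 : b + c ≤ v) : max a b + c ≤ v := by
  rcases le_total a b with h | h
  · rwa [max_eq_right h]
  · rwa [max_eq_left h]

/-- A `d`-periodic trajectory with period `λ ≥ 0` is consistent for the P-TEG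
`(A⁰, A¹, B⁰, B¹)` iff the single max-plus inequality
`((T_P ⊗ᵗ P) ⊕ (T_I ⊗ᵗ I) ⊕ (T_C ⊗ᵗ C)) ⊗ x̃ ⪯ x̃`, with `P = (B¹)♯`, `I = A¹ ⊕ E`,
`C = A⁰ ⊕ (B⁰)♯` and `T_C = E`, has a real solution `x̃ ∈ ℝ^{dn}`. -/
theorem stmt13 {n : ℕ} (d : ℕ) (hd : 0 < d) (lam : ℝ) (hlam : 0 ≤ lam)
    (A0 A1 B0 B1 : Matrix (Fin n) (Fin n) EReal)
    (hA0 : ∀ i j, A0 i j ≠ ⊤ ∧ (A0 i j ≠ ⊥ → 0 ≤ A0 i j))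
    (hA1 : ∀ i j, A1 i j ≠ ⊤ ∧ (A1 i j ≠ ⊥ → 0 ≤ A1 i j))
    (hB0 : ∀ i j, B0 i j ≠ ⊥ ∧ (B0 i j ≠ ⊤ → 0 ≤ B0 i j))
    (hB1 : ∀ i j, B1 i j ≠ ⊥ ∧ (B1 i j ≠ ⊤ → 0 ≤ B1 i j)) :
    (∃ x : ℕ → Fin n → ℝ, Consistent A0 A1 B0 B1 x ∧ DPeriodic d lam x) ↔
      ∃ xt : Fin d × Fin n → ℝ,
        ∀ p : Fin d × Fin n,
          (⨆ q : Fin d × Fin n,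
            (max (TPE d lam p.1 q.1 + (-(B1 q.2 p.2)))
              (max (TIE d lam p.1 q.1 + max (A1 p.2 q.2) (mpIdE n p.2 q.2))
                (mpIdE d p.1 q.1 + max (A0 p.2 q.2) (-(B0 q.2 p.2))))) + (xt q : EReal))
            ≤ (xt p : EReal) := by
  constructor
  · rintro ⟨x, hc, hper⟩
    have hA0' : ∀ (k : ℕ) i j, A0 i j + ((x k j : ℝ) : EReal) ≤ ((x k i : ℝ) : EReal) :=
      fun k i j => le_trans (le_iSup (fun j => A0 i j + ((x k j : ℝ) : EReal)) j) ((hc k).1 i)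
    have hB0' : ∀ (k : ℕ) i j, ((x k i : ℝ) : EReal) ≤ dualAdd (B0 i j) (x k j) :=
      fun k i j => le_trans ((hc k).2.1 i) (iInf_le _ j)
    have hA1' : ∀ (k : ℕ) i j, A1 i j + ((x k j : ℝ) : EReal) ≤ ((x (k+1) i : ℝ) : EReal) :=
      fun k i j => le_trans (le_iSup (fun j => A1 i j + ((x k j : ℝ) : EReal)) j) ((hc k).2.2.1 i)
    have hB1' : ∀ (k : ℕ) i j, ((x (k+1) i : ℝ) : EReal) ≤ dualAdd (B1 i j) (x k j) :=
      fun k i j => le_trans ((hc k).2.2.2.1 i) (iInf_le _ j)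
    have hmono : ∀ (k : ℕ) i, x k i ≤ x (k+1) i := fun k i => (hc k).2.2.2.2 i
    have hd1 : d - 1 + 1 = d := Nat.succ_pred_eq_of_pos hd
    refine ⟨fun p => x p.1 p.2, ?_⟩
    rintro ⟨k, i⟩
    apply iSup_le
    rintro ⟨l, j⟩
    dsimp only
    apply max_add_le
    · -- T1
      rw [TPE]
      split_ifs with h1 h2
      · rw [zero_add, ← h1]
        exact (dual_helper _ (hB1 j i).1 _ _).mpr (hB1' (↑k) j i)
      · rw [h2.1, h2.2, rearr]
        have hxd : (d:ℝ) * lam + x 0 j = x d j := by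
          have := hper 0 j; rw [zero_add] at this; linarith
        rw [hxd]
        have h4 := hB1' (d-1) j i
        rw [hd1] at h4
        exact (dual_helper _ (hB1 j i).1 _ _).mpr h4
      · rw [EReal.bot_add, EReal.bot_add]; exact bot_le
    apply max_add_le
    · -- T2
      rw [TIE]
      split_ifs with h1 h2
      · rw [zero_add, ← h1]
        apply max_add_le
        · exact hA1' (↑l) i j
        · rw [mpIdE]
          split_ifs with hij
          · subst hij
            rw [zero_add]
            exact_mod_cast hmono (↑l) i
          · rw [EReal.bot_add]; exact bot_le
      · rw [h2.1, h2.2, negshift_helper]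
        have hxd : (d:ℝ) * lam + x 0 i = x d i := by
          have := hper 0 i; rw [zero_add] at this; linarith
        rw [hxd]
        apply max_add_le
        · have h4 := hA1' (d-1) i j
          rw [hd1] at h4
          exact h4
        · rw [mpIdE]
          split_ifs with hij
          · subst hij
            rw [zero_add]
            have h5 := hmono (d-1) i
            rw [hd1] at h5
            exact_mod_cast h5
          · rw [EReal.bot_add]; exact bot_le
      · rw [EReal.bot_add]; exact bot_le
    · -- T3
      rw [mpIdE]
      split_ifs with h1
      · subst h1
        rw [zero_add]
        apply max_add_le
        · exact hA0' (↑k) i j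
        · exact (dual_helper _ (hB0 j i).1 _ _).mpr (hB0' (↑k) j i)
      · rw [EReal.bot_add]; exact bot_le
  · rintro ⟨xt, hx⟩
    have hx' : ∀ (a : Fin d) (i : Fin n) (b : Fin d) (j : Fin n),
        (max (TPE d lam a b + -(B1 j i))
          (max (TIE d lam a b + max (A1 i j) (mpIdE n i j))
            (mpIdE d a b + max (A0 i j) (-(B0 j i))))) + ((xt (b,j) : ℝ) : EReal)
          ≤ ((xt (a,i) : ℝ) : EReal) :=
      fun a i b j =>
        le_trans
          (le_iSup (fun q : Fin d × Fin n =>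
            (max (TPE d lam a q.1 + (-(B1 q.2 i)))
              (max (TIE d lam a q.1 + max (A1 i q.2) (mpIdE n i q.2))
                (mpIdE d a q.1 + max (A0 i q.2) (-(B0 q.2 i))))) + ((xt q : ℝ) : EReal))
            (b, j))
          (hx (a, i))
    have hT1 : ∀ (a b : Fin d) (i j : Fin n),
        TPE d lam a b + -(B1 j i) + ((xt (b,j):ℝ):EReal) ≤ ((xt (a,i):ℝ):EReal) :=
      fun a b i j => le_trans (add_le_add_left (le_max_left _ _) _) (hx' a i b j)
    have hT2 : ∀ (a b : Fin d) (i j : Fin n),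
        TIE d lam a b + max (A1 i j) (mpIdE n i j) + ((xt (b,j):ℝ):EReal)
          ≤ ((xt (a,i):ℝ):EReal) :=
      fun a b i j =>
        le_trans (add_le_add_left (le_trans (le_max_left _ _) (le_max_right _ _)) _)
          (hx' a i b j)
    have hT3 : ∀ (a b : Fin d) (i j : Fin n),
        mpIdE d a b + max (A0 i j) (-(B0 j i)) + ((xt (b,j):ℝ):EReal)
          ≤ ((xt (a,i):ℝ):EReal) :=
      fun a b i j =>
        le_trans (add_le_add_left (le_trans (le_max_right _ _) (le_max_right _ _)) _)
          (hx' a i b j)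
    obtain ⟨x, hxdef⟩ : ∃ x : ℕ → Fin n → ℝ,
        ∀ k i, x k i = (↑(k / d) : ℝ) * ((d:ℝ) * lam) + xt (⟨k % d, Nat.mod_lt k hd⟩, i) :=
      ⟨_, fun k i => rfl⟩
    refine ⟨x, ?_, ?_⟩
    · -- Consistent
      intro k
      have hrk : k % d < d := Nat.mod_lt k hd
      have cond1 : ∀ i, (⨆ j, A0 i j + ((x k j : ℝ) : EReal)) ≤ ((x k i : ℝ) : EReal) := by
        intro i
        apply iSup_le
        intro j
        have h3 := hT3 ⟨k % d, Nat.mod_lt k hd⟩ ⟨k % d, Nat.mod_lt k hd⟩ i j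
        rw [show mpIdE d ⟨k % d, Nat.mod_lt k hd⟩ ⟨k % d, Nat.mod_lt k hd⟩ = 0 from if_pos rfl,
          zero_add] at h3
        rw [hxdef k j, hxdef k i]
        exact (shift_helper _ _ _ _).mp (le_trans (add_le_add_left (le_max_left _ _) _) h3)
      have cond2 : ∀ i, ((x k i : ℝ) : EReal) ≤ ⨅ j, dualAdd (B0 i j) ((x k j : ℝ) : EReal) := by
        intro i
        apply le_iInf
        intro j
        have h3 := hT3 ⟨k % d, Nat.mod_lt k hd⟩ ⟨k % d, Nat.mod_lt k hd⟩ j i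
        rw [show mpIdE d ⟨k % d, Nat.mod_lt k hd⟩ ⟨k % d, Nat.mod_lt k hd⟩ = 0 from if_pos rfl,
          zero_add] at h3
        have h3' := (shift_helper _ ((↑(k / d) : ℝ) * ((d:ℝ) * lam)) _ _).mp
          (le_trans (add_le_add_left (le_max_right _ _) _) h3)
        rw [hxdef k i, hxdef k j]
        exact (dual_helper _ (hB0 i j).1 _ _).mp h3'
      have key : (∀ i j, A1 i j + ((x k j:ℝ):EReal) ≤ ((x (k+1) i:ℝ):EReal)) ∧
          (∀ i j, ((x (k+1) i:ℝ):EReal) ≤ dualAdd (B1 i j) ((x k j:ℝ):EReal)) ∧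
          (∀ i, x k i ≤ x (k+1) i) := by
        rcases Nat.lt_or_ge (k % d + 1) d with hlt | hge
        · have hk : k + 1 = d * (k / d) + (k % d + 1) := by
            have := Nat.div_add_mod k d; omega
          have e1 : (k+1)/d = k/d := by
            rw [hk, Nat.mul_add_div hd, Nat.div_eq_of_lt hlt, add_zero]
          have e2 : (k+1) % d = k % d + 1 := by
            rw [hk, Nat.mul_add_mod, Nat.mod_eq_of_lt hlt]
          have fr1 : (⟨(k+1) % d, Nat.mod_lt (k+1) hd⟩ : Fin d) = ⟨k % d + 1, hlt⟩ := Fin.ext e2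
          have hx1 : ∀ i, x (k+1) i
              = (↑(k / d) : ℝ) * ((d:ℝ) * lam) + xt (⟨k % d + 1, hlt⟩, i) := by
            intro i; rw [hxdef, e1, fr1]
          refine ⟨?_, ?_, ?_⟩
          · intro i j
            have h2 := hT2 ⟨k % d + 1, hlt⟩ ⟨k % d, Nat.mod_lt k hd⟩ i j
            rw [show TIE d lam ⟨k % d + 1, hlt⟩ ⟨k % d, Nat.mod_lt k hd⟩ = 0 from if_pos rfl,
              zero_add] at h2
            rw [hxdef k j, hx1 i]
            exact (shift_helper _ _ _ _).mp (le_trans (add_le_add_left (le_max_left _ _) _) h2)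
          · intro i j
            have h1 := hT1 ⟨k % d, Nat.mod_lt k hd⟩ ⟨k % d + 1, hlt⟩ j i
            rw [show TPE d lam ⟨k % d, Nat.mod_lt k hd⟩ ⟨k % d + 1, hlt⟩ = 0 from if_pos rfl,
              zero_add] at h1
            rw [hxdef k j, hx1 i]
            exact (dual_helper _ (hB1 i j).1 _ _).mp ((shift_helper _ _ _ _).mp h1)
          · intro i
            have h2 := hT2 ⟨k % d + 1, hlt⟩ ⟨k % d, Nat.mod_lt k hd⟩ i i
            rw [show TIE d lam ⟨k % d + 1, hlt⟩ ⟨k % d, Nat.mod_lt k hd⟩ = 0 from if_pos rfl,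
              zero_add] at h2
            have hmax : (0:EReal) ≤ max (A1 i i) (mpIdE n i i) :=
              le_trans (le_of_eq (show (0:EReal) = mpIdE n i i from (if_pos rfl).symm))
                (le_max_right _ _)
            have h2' := le_trans (add_le_add_left hmax _) h2
            rw [zero_add] at h2'
            rw [hxdef k i, hx1 i]
            have := EReal.coe_le_coe_iff.mp h2'
            linarith
        · have heq : k % d + 1 = d := by omega
          have hk : k + 1 = d * (k / d + 1) + 0 := by
            have h := Nat.div_add_mod k d
            rw [Nat.mul_add, Nat.mul_one, add_zero]
            omega
          have e1 : (k+1)/d = k/d + 1 := by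
            rw [hk, Nat.mul_add_div hd]
            simp
          have e2 : (k+1) % d = 0 := by
            rw [hk, Nat.mul_add_mod, Nat.zero_mod]
          have fr0 : (⟨(k+1) % d, Nat.mod_lt (k+1) hd⟩ : Fin d) = ⟨0, hd⟩ := Fin.ext e2
          have hx1 : ∀ i, x (k+1) i
              = (↑(k / d) : ℝ) * ((d:ℝ) * lam) + ((d:ℝ) * lam + xt (⟨0, hd⟩, i)) := by
            intro i; rw [hxdef, e1, fr0]; push_cast; ring
          have hTIEw : TIE d lam ⟨0, hd⟩ ⟨k % d, Nat.mod_lt k hd⟩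
              = ((-((d:ℝ) * lam) : ℝ) : EReal) := by
            show (if k % d + 1 = 0 then (0:EReal)
              else if 0 = 0 ∧ k % d = d - 1 then ((-((d:ℝ) * lam) : ℝ) : EReal) else ⊥) = _
            rw [if_neg (by omega), if_pos ⟨rfl, by omega⟩]
          have hTPEw : TPE d lam ⟨k % d, Nat.mod_lt k hd⟩ ⟨0, hd⟩
              = ((((d:ℝ) * lam : ℝ)) : EReal) := by
            show (if k % d + 1 = 0 then (0:EReal)
              else if k % d = d - 1 ∧ 0 = 0 then ((((d:ℝ) * lam : ℝ)) : EReal) else ⊥) = _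
            rw [if_neg (by omega), if_pos ⟨by omega, rfl⟩]
          refine ⟨?_, ?_, ?_⟩
          · intro i j
            have h2 := hT2 ⟨0, hd⟩ ⟨k % d, Nat.mod_lt k hd⟩ i j
            rw [hTIEw] at h2
            have h2' := (negshift_helper ((d:ℝ) * lam) _ _ _).mp h2
            rw [hxdef k j, hx1 i]
            exact (shift_helper _ _ _ _).mp (le_trans (add_le_add_left (le_max_left _ _) _) h2')
          · intro i j
            have h1 := hT1 ⟨k % d, Nat.mod_lt k hd⟩ ⟨0, hd⟩ j i
            rw [hTPEw, rearr] at h1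
            rw [hxdef k j, hx1 i]
            exact (dual_helper _ (hB1 i j).1 _ _).mp ((shift_helper _ _ _ _).mp h1)
          · intro i
            have h2 := hT2 ⟨0, hd⟩ ⟨k % d, Nat.mod_lt k hd⟩ i i
            rw [hTIEw] at h2
            have h2' := (negshift_helper ((d:ℝ) * lam) _ _ _).mp h2
            have hmax : (0:EReal) ≤ max (A1 i i) (mpIdE n i i) :=
              le_trans (le_of_eq (show (0:EReal) = mpIdE n i i from (if_pos rfl).symm))
                (le_max_right _ _)
            have h2'' := le_trans (add_le_add_left hmax _) h2'
            rw [zero_add] at h2''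
            rw [hxdef k i, hx1 i]
            have := EReal.coe_le_coe_iff.mp h2''
            linarith
      exact ⟨cond1, cond2, fun i => iSup_le (key.1 i), fun i => le_iInf (key.2.1 i), key.2.2⟩
    · -- DPeriodic
      intro k i
      have fr : (⟨(k + d) % d, Nat.mod_lt (k + d) hd⟩ : Fin d) = ⟨k % d, Nat.mod_lt k hd⟩ :=
        Fin.ext (Nat.add_mod_right k d)
      rw [hxdef, hxdef, Nat.add_div_right k hd, fr]
      push_cast; ring
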